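/- An ORB-tree T is trace-balanced (trace-balanced at every non-root internal node) if and only if its Haar-like basis diagonalizes its covariance matrix S; in this case σ(S) = {ℓ*(v,i) : v ∈ I, i ∈ L(v) arbitrary}, with the multiplicity of each eigenvalue λ equal to the number of internal nodes v with ℓ*(v,i) = λ for some (equivalently, any) i ∈ L(v). -/

import Mathlib

open Finset

noncomputable section
open scoped Classical

/-- A finite rooted tree on vertices `Fin n`, given by a parent function:
every vertex reaches the root by iterating `parent`, and the root is its own parent. -/
structure RTree where
  n : ℕ
  npos : 0 < n
  root : Fin n
  parent : Fin n → Fin n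
  parent_root : parent root = root
  reach : ∀ v, ∃ k, parent^[k] v = root

namespace RTree

variable (T : RTree)

/-- `u` is an ancestor of `v` (every vertex is an ancestor of itself). -/
def Anc (u v : Fin T.n) : Prop := ∃ k, T.parent^[k] v = u

/-- The children of a vertex. -/
def children (v : Fin T.n) : Finset (Fin T.n) :=
  Finset.univ.filter fun u => T.parent u = v ∧ u ≠ T.root

def IsLeaf (v : Fin T.n) : Prop := T.children v = ∅

/-- The leaf set of the tree. -/
def leaves : Finset (Fin T.n) := Finset.univ.filter fun v => T.IsLeaf v

/-- The internal (non-leaf) vertices; the root is internal. -/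
def internal : Finset (Fin T.n) := Finset.univ.filter fun v => ¬ T.IsLeaf v

/-- `L(v)`: the leaves descending from `v`. -/
def Ldesc (v : Fin T.n) : Finset (Fin T.n) := T.leaves.filter fun i => T.Anc v i

/-- Depth of a vertex: number of edges to the root. -/
def depth (v : Fin T.n) : ℕ := Nat.find (T.reach v)

/-- Number of vertices of the subtree rooted at `v`. -/
def subtreeSize (v : Fin T.n) : ℕ := (Finset.univ.filter fun u => T.Anc v u).card

/-- ORB-tree: the root has exactly one child and is not a leaf, and every other
internal vertex has exactly two children (so every vertex has degree 1 or 3). -/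
def IsORB : Prop :=
  ¬ T.IsLeaf T.root ∧ (T.children T.root).card = 1 ∧
  ∀ v, ¬ T.IsLeaf v → v ≠ T.root → (T.children v).card = 2

/-- The type of leaves. -/
abbrev Leaf := {i // i ∈ T.leaves}

/-- `δ_e` for the edge `e` above vertex `v`: the indicator vector of the leaves
descending from that edge. -/
def delta (v : Fin T.n) : T.Leaf → ℝ := fun i => if T.Anc v i.1 then 1 else 0

/-- The covariance matrix of the tree with branch lengths `ℓ`
(`ℓ v` is the length of the edge joining `v` to its parent):
`S = ∑_{e ∈ E} ℓ(e) δ_e δ_e'`.  Equivalently `S(i,j) = ∑_{e ∈ [i∧j,∘]} ℓ(e)`. -/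
def cov (ℓ : Fin T.n → ℝ) : Matrix T.Leaf T.Leaf ℝ :=
  ∑ v ∈ Finset.univ.filter (fun v => v ≠ T.root),
    ℓ v • Matrix.vecMulVec (T.delta v) (T.delta v)

/-- The trace branch length `ℓ*(i,v) = ∑_{e ∈ [i,v]} |L(e)| ℓ(e)`; the edge above `w`
lies on the path between `i` and `v` iff exactly one of `i`, `v` descends from `w`. -/
def lstar (ℓ : Fin T.n → ℝ) (i v : Fin T.n) : ℝ :=
  ∑ w ∈ Finset.univ.filter (fun w => w ≠ T.root ∧
      ((T.Anc w i ∧ ¬ T.Anc w v) ∨ (T.Anc w v ∧ ¬ T.Anc w i))),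
    ((T.Ldesc w).card : ℝ) * ℓ w

/-- `φ` is the family of Haar-like wavelets of `T`, indexed by internal vertices. -/
def IsHaarLike (φ : Fin T.n → T.Leaf → ℝ) : Prop :=
  (∀ i, φ T.root i = 1 / Real.sqrt ((T.leaves.card : ℝ))) ∧
  ∀ v ∈ T.internal, v ≠ T.root → ∃ c₀ c₁, c₀ ≠ c₁ ∧ T.children v = {c₀, c₁} ∧
    ∀ i : T.Leaf, φ v i =
      if i.1 ∈ T.Ldesc c₀ then
        Real.sqrt (((T.Ldesc c₁).card : ℝ) / (((T.Ldesc c₀).card : ℝ) * ((T.Ldesc v).card : ℝ)))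
      else if i.1 ∈ T.Ldesc c₁ then
        - Real.sqrt (((T.Ldesc c₀).card : ℝ) / (((T.Ldesc c₁).card : ℝ) * ((T.Ldesc v).card : ℝ)))
      else 0

/-- `T` is trace-balanced (at every non-root internal vertex). -/
def TraceBalanced (ℓ : Fin T.n → ℝ) : Prop :=
  ∀ v ∈ T.internal, v ≠ T.root → ∀ i ∈ T.Ldesc v, ∀ j ∈ T.Ldesc v,
    T.lstar ℓ i v = T.lstar ℓ j v

end RTree

namespace RTree

variable {T : RTree}

lemma anc_refl (v : Fin T.n) : T.Anc v v := ⟨0, rfl⟩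

lemma anc_trans {u v w : Fin T.n} (h1 : T.Anc u v) (h2 : T.Anc v w) : T.Anc u w := by
  obtain ⟨a, ha⟩ := h1; obtain ⟨b, hb⟩ := h2
  exact ⟨a + b, by rw [Function.iterate_add_apply, hb, ha]⟩

lemma anc_root (v : Fin T.n) : T.Anc T.root v := T.reach v

lemma iterate_root (k : ℕ) : T.parent^[k] T.root = T.root :=
  Function.iterate_fixed T.parent_root k

lemma anc_root_eq {u : Fin T.n} (h : T.Anc u T.root) : u = T.root := by
  obtain ⟨k, hk⟩ := h; rw [iterate_root] at hk; exact hk.symm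

lemma anc_antisymm {u v : Fin T.n} (h1 : T.Anc u v) (h2 : T.Anc v u) : u = v := by
  obtain ⟨a, ha⟩ := h1; obtain ⟨b, hb⟩ := h2
  rcases Nat.eq_zero_or_pos b with hb0 | hpos
  · rw [hb0] at hb; exact hb
  · have hper : T.parent^[b + a] v = v := by
      rw [Function.iterate_add_apply, ha, hb]
    obtain ⟨K, hK⟩ := T.reach v
    have hmul : T.parent^[(b + a) * (K + 1)] v = v := by
      rw [Function.iterate_mul]
      exact Function.iterate_fixed hper (K + 1)
    have hKle : K ≤ (b + a) * (K + 1) := by nlinarith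
    have hvroot : v = T.root := by
      have h2' : T.parent^[(b + a) * (K + 1)] v = T.root := by
        rw [show (b + a) * (K + 1) = ((b + a) * (K + 1) - K) + K by omega,
          Function.iterate_add_apply, hK, iterate_root]
      exact hmul.symm.trans h2'
    subst hvroot
    rw [← ha, iterate_root]

lemma anc_total {u w i : Fin T.n} (h1 : T.Anc u i) (h2 : T.Anc w i) :
    T.Anc u w ∨ T.Anc w u := by
  obtain ⟨a, ha⟩ := h1; obtain ⟨b, hb⟩ := h2
  rcases le_total a b with h | h
  · right
    refine ⟨b - a, ?_⟩
    rw [← ha, ← Function.iterate_add_apply]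
    rw [show b - a + a = b by omega, hb]
  · left
    refine ⟨a - b, ?_⟩
    rw [← hb, ← Function.iterate_add_apply]
    rw [show a - b + b = a by omega, ha]

lemma mem_children {u v : Fin T.n} : u ∈ T.children v ↔ T.parent u = v ∧ u ≠ T.root := by
  simp [children]

lemma anc_of_child {c v : Fin T.n} (h : c ∈ T.children v) : T.Anc v c :=
  ⟨1, by simpa using (mem_children.1 h).1⟩

/-- If `v` is a strict ancestor of `w`, some child of `v` is an ancestor of `w`. -/
lemma anc_step {v w : Fin T.n} (h : T.Anc v w) (hne : v ≠ w) :
    ∃ c ∈ T.children v, T.Anc c w := by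
  classical
  have hk := Nat.find_spec h
  set k := Nat.find h with hkdef
  have hk0 : k ≠ 0 := by
    intro h0
    rw [h0] at hk; exact hne hk.symm
  refine ⟨T.parent^[k-1] w, ?_, ⟨k - 1, rfl⟩⟩
  rw [mem_children]
  have h2 : T.parent^[k-1+1] w = v := by
    rw [show k - 1 + 1 = k from by omega]; exact hk
  constructor
  · rw [← h2, Function.iterate_succ_apply']
  · intro hroot
    have hv : v = T.root := by
      rw [← h2, Function.iterate_succ_apply', hroot, T.parent_root]
    exact Nat.find_min h (m := k - 1) (by omega) (by rw [hroot, hv])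

lemma mem_leaves {v : Fin T.n} : v ∈ T.leaves ↔ T.IsLeaf v := by simp [leaves]
lemma mem_internal {v : Fin T.n} : v ∈ T.internal ↔ ¬ T.IsLeaf v := by simp [internal]
lemma mem_Ldesc {i v : Fin T.n} : i ∈ T.Ldesc v ↔ i ∈ T.leaves ∧ T.Anc v i := by
  simp [Ldesc]

lemma Ldesc_subset {v w : Fin T.n} (h : T.Anc v w) : T.Ldesc w ⊆ T.Ldesc v := by
  intro i hi
  rw [mem_Ldesc] at hi ⊢
  exact ⟨hi.1, anc_trans h hi.2⟩

lemma Ldesc_disj {v w i : Fin T.n} (h1 : ¬ T.Anc v w) (h2 : ¬ T.Anc w v)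
    (hi : i ∈ T.Ldesc v) : i ∉ T.Ldesc w := by
  intro hw
  rw [mem_Ldesc] at hi hw
  rcases anc_total hi.2 hw.2 with h | h
  · exact h1 h
  · exact h2 h

lemma depth_spec (v : Fin T.n) : T.parent^[T.depth v] v = T.root := Nat.find_spec (T.reach v)

lemma depth_lt_n (v : Fin T.n) : T.depth v < T.n := by
  classical
  set d := T.depth v with hd
  have key : ∀ a b : ℕ, a < b → b ≤ d → T.parent^[a] v ≠ T.parent^[b] v := by
    intro a b hlt hble heq
    have h1 : T.parent^[d - b + a] v = T.root := by
      have h2 : T.parent^[d - b] (T.parent^[b] v) = T.root := by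
        rw [← Function.iterate_add_apply, show d - b + b = d by omega]
        exact depth_spec v
      rw [← heq, ← Function.iterate_add_apply] at h2
      exact h2
    have hle : T.depth v ≤ d - b + a := Nat.find_le h1
    omega
  have hinj : Function.Injective (fun j : Fin (d+1) => T.parent^[j.1] v) := by
    intro a b hab
    by_contra hne
    have hne' : a.1 ≠ b.1 := fun h => hne (Fin.ext h)
    rcases lt_or_gt_of_ne hne' with h | h
    · exact key a.1 b.1 h (by omega) hab
    · exact key b.1 a.1 h (by omega) hab.symm
  have hcard := Fintype.card_le_of_injective _ hinj
  simp only [Fintype.card_fin] at hcard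
  omega

lemma depth_child_eq {c v : Fin T.n} (h : c ∈ T.children v) : T.depth v < T.depth c := by
  obtain ⟨hp, hroot⟩ := mem_children.1 h
  have hc0 : T.depth c ≠ 0 := by
    intro h0
    have := depth_spec c
    rw [h0] at this
    exact hroot this
  have : T.parent^[T.depth c - 1] v = T.root := by
    have := depth_spec c
    rw [show T.depth c = (T.depth c - 1) + 1 by omega] at this
    rwa [Function.iterate_succ_apply, hp] at this
  have hle : T.depth v ≤ T.depth c - 1 := Nat.find_le this
  omega

lemma not_isLeaf_iff {v : Fin T.n} : ¬ T.IsLeaf v ↔ (T.children v).Nonempty := by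
  rw [IsLeaf, ← Finset.not_nonempty_iff_eq_empty, not_not]

lemma Ldesc_nonempty (v : Fin T.n) : (T.Ldesc v).Nonempty := by
  classical
  suffices H : ∀ m v, T.n - T.depth v ≤ m → (T.Ldesc v).Nonempty from
    H T.n v (by omega)
  intro m
  induction m with
  | zero => intro v hv; have := depth_lt_n v; omega
  | succ m ih =>
    intro v hv
    by_cases hleaf : T.IsLeaf v
    · exact ⟨v, mem_Ldesc.2 ⟨mem_leaves.2 hleaf, anc_refl v⟩⟩
    · obtain ⟨c, hc⟩ := not_isLeaf_iff.1 hleaf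
      have hd := depth_child_eq hc
      have hcd := depth_lt_n c
      obtain ⟨i, hi⟩ := ih c (by omega)
      exact ⟨i, Ldesc_subset (anc_of_child hc) hi⟩

lemma Ldesc_card_pos (v : Fin T.n) : 0 < (T.Ldesc v).card :=
  Finset.card_pos.2 (Ldesc_nonempty v)

lemma parent_fix_eq_root {c : Fin T.n} (hp : T.parent c = c) : c = T.root := by
  obtain ⟨K, hK⟩ := T.reach c
  rw [Function.iterate_fixed hp K] at hK; exact hK

lemma children_not_anc {v c c' : Fin T.n} (hc : c ∈ T.children v) (hc' : c' ∈ T.children v)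
    (hne : c ≠ c') : ¬ T.Anc c c' := by
  rintro ⟨k, hk⟩
  have hk0 : k ≠ 0 := by
    rintro rfl; exact hne hk.symm
  have hcv : T.Anc c v := by
    refine ⟨k - 1, ?_⟩
    have h2 : T.parent^[(k-1)+1] c' = c := by
      rw [show k - 1 + 1 = k from by omega]; exact hk
    rw [Function.iterate_succ_apply, (mem_children.1 hc').1] at h2
    exact h2
  have hvc : T.Anc v c := anc_of_child hc
  have hcv' : c = v := anc_antisymm hcv hvc
  have hp : T.parent c = c := by rw [(mem_children.1 hc).1, hcv']
  exact (mem_children.1 hc).2 (parent_fix_eq_root hp)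

lemma Ldesc_children_disjoint {v c c' : Fin T.n} (hc : c ∈ T.children v)
    (hc' : c' ∈ T.children v) (hne : c ≠ c') {i : Fin T.n}
    (hi : i ∈ T.Ldesc c) : i ∉ T.Ldesc c' :=
  Ldesc_disj (children_not_anc hc hc' hne) (children_not_anc hc' hc hne.symm) hi

lemma anc_leaf_ne {v i : Fin T.n} (hv : ¬ T.IsLeaf v) (hi : i ∈ T.leaves) : v ≠ i := by
  rintro rfl; exact hv (mem_leaves.1 hi)

lemma Ldesc_eq_union {v c₀ c₁ : Fin T.n} (hv : ¬ T.IsLeaf v)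
    (hcc : T.children v = {c₀, c₁}) :
    T.Ldesc v = T.Ldesc c₀ ∪ T.Ldesc c₁ := by
  have hc0 : c₀ ∈ T.children v := by rw [hcc]; simp
  have hc1 : c₁ ∈ T.children v := by rw [hcc]; simp
  apply Finset.Subset.antisymm
  · intro i hi
    rw [mem_Ldesc] at hi
    obtain ⟨c, hc, hci⟩ := anc_step hi.2 (anc_leaf_ne hv hi.1)
    rw [hcc] at hc
    simp only [Finset.mem_insert, Finset.mem_singleton] at hc
    rcases hc with rfl | rfl
    · exact Finset.mem_union_left _ (mem_Ldesc.2 ⟨hi.1, hci⟩)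
    · exact Finset.mem_union_right _ (mem_Ldesc.2 ⟨hi.1, hci⟩)
  · intro i hi
    rcases Finset.mem_union.1 hi with h | h
    · exact Ldesc_subset (anc_of_child hc0) h
    · exact Ldesc_subset (anc_of_child hc1) h

lemma root_mem_internal (hT : T.IsORB) : T.root ∈ T.internal := mem_internal.2 hT.1

lemma card_internal_eq_card_leaves (hT : T.IsORB) : T.internal.card = T.leaves.card := by
  classical
  -- each non-root vertex is a child of exactly one vertex
  have hdisj : ∀ v ∈ (Finset.univ : Finset (Fin T.n)), ∀ v' ∈ Finset.univ, v ≠ v' →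
      Disjoint (T.children v) (T.children v') := by
    intro v _ v' _ hne
    rw [Finset.disjoint_left]
    intro u hu hu'
    exact hne ((mem_children.1 hu).1 ▸ ((mem_children.1 hu').1).symm ▸ rfl)
  have hbi : Finset.univ.biUnion T.children = Finset.univ.erase T.root := by
    ext u
    constructor
    · intro h
      obtain ⟨v, -, hu⟩ := Finset.mem_biUnion.1 h
      exact Finset.mem_erase.2 ⟨(mem_children.1 hu).2, Finset.mem_univ _⟩
    · intro h
      exact Finset.mem_biUnion.2
        ⟨T.parent u, Finset.mem_univ _, mem_children.2 ⟨rfl, (Finset.mem_erase.1 h).1⟩⟩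
  have hsum : ∑ v : Fin T.n, (T.children v).card = T.n - 1 := by
    rw [← Finset.card_biUnion hdisj, hbi, Finset.card_erase_of_mem (Finset.mem_univ _)]
    simp
  have hsplit : ∑ v ∈ T.internal, (T.children v).card
      + ∑ v ∈ T.leaves, (T.children v).card = ∑ v : Fin T.n, (T.children v).card := by
    rw [internal, leaves, add_comm]
    exact Finset.sum_filter_add_sum_filter_not Finset.univ (fun v => T.IsLeaf v) _
  have hleaf0 : ∑ v ∈ T.leaves, (T.children v).card = 0 := by
    apply Finset.sum_eq_zero
    intro v hv
    rw [(mem_leaves.1 hv : T.children v = ∅)]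
    simp
  have hroot : T.root ∈ T.internal := root_mem_internal hT
  have hint : ∑ v ∈ T.internal, (T.children v).card
      = 1 + 2 * (T.internal.card - 1) := by
    rw [← Finset.add_sum_erase _ _ hroot, hT.2.1]
    congr 1
    rw [Finset.sum_congr rfl (fun v hv => ?_), Finset.sum_const, smul_eq_mul,
      Finset.card_erase_of_mem hroot, mul_comm]
    rw [Finset.mem_erase] at hv
    exact hT.2.2 v (mem_internal.1 hv.2) hv.1
  have hpart : T.internal.card + T.leaves.card = T.n := by
    rw [internal, leaves, add_comm]
    rw [Finset.card_filter_add_card_filter_not (p := fun v => T.IsLeaf v)]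
    simp
  have hIpos : 0 < T.internal.card := Finset.card_pos.2 ⟨_, hroot⟩
  have hn := T.npos
  omega

/-! ### sqrt helpers -/

lemma sqrt_factor {a b c : ℝ} (ha : 0 < a) (hb : 0 ≤ b) (hc : 0 < c) :
    a * Real.sqrt (b / (a * c)) = Real.sqrt (a * b / c) := by
  have h : a * Real.sqrt (b / (a * c)) = Real.sqrt (a ^ 2) * Real.sqrt (b / (a * c)) := by
    rw [Real.sqrt_sq ha.le]
  rw [h, ← Real.sqrt_mul (by positivity)]
  congr 1
  field_simp

lemma sqrt_balance {n₀ n₁ nv : ℝ} (h₀ : 0 < n₀) (h₁ : 0 < n₁) (hnv : 0 < nv) :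
    n₀ * Real.sqrt (n₁ / (n₀ * nv)) = n₁ * Real.sqrt (n₀ / (n₁ * nv)) := by
  rw [sqrt_factor h₀ h₁.le hnv, sqrt_factor h₁ h₀.le hnv, mul_comm n₀ n₁]

/-! ### Leaf-type descendant sets -/

def LD (T : RTree) (w : Fin T.n) : Finset T.Leaf :=
  Finset.univ.filter (fun i => T.Anc w i.1)

variable {T : RTree} {φ : Fin T.n → T.Leaf → ℝ}

lemma mem_LD {w : Fin T.n} {i : T.Leaf} : i ∈ LD T w ↔ T.Anc w i.1 := by simp [LD]

lemma mem_LD_iff_Ldesc {w : Fin T.n} {i : T.Leaf} : i ∈ LD T w ↔ i.1 ∈ T.Ldesc w := by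
  rw [mem_LD, mem_Ldesc]
  exact ⟨fun h => ⟨i.2, h⟩, fun h => h.2⟩

lemma LD_card {w : Fin T.n} : (LD T w).card = (T.Ldesc w).card := by
  apply Finset.card_bij (fun i _ => i.1)
  · intro a ha; exact mem_Ldesc.2 ⟨a.2, mem_LD.1 ha⟩
  · intro a _ b _ h; exact Subtype.ext h
  · intro b hb; exact ⟨⟨b, (mem_Ldesc.1 hb).1⟩, mem_LD.2 (mem_Ldesc.1 hb).2, rfl⟩

lemma LD_nonempty (w : Fin T.n) : (LD T w).Nonempty := by
  obtain ⟨x, hx⟩ := Ldesc_nonempty (T := T) w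
  exact ⟨⟨x, (mem_Ldesc.1 hx).1⟩, mem_LD_iff_Ldesc.2 hx⟩

lemma LD_union {v c₀ c₁ : Fin T.n} (hv : ¬ T.IsLeaf v) (hcc : T.children v = {c₀, c₁}) :
    LD T v = LD T c₀ ∪ LD T c₁ := by
  ext i
  rw [Finset.mem_union, mem_LD_iff_Ldesc, mem_LD_iff_Ldesc, mem_LD_iff_Ldesc,
    Ldesc_eq_union hv hcc, Finset.mem_union]

lemma LD_disjoint {v c₀ c₁ : Fin T.n} (hc0 : c₀ ∈ T.children v) (hc1 : c₁ ∈ T.children v)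
    (hne : c₀ ≠ c₁) : Disjoint (LD T c₀) (LD T c₁) :=
  Finset.disjoint_left.2 fun i hi hi' =>
    Ldesc_children_disjoint hc0 hc1 hne (mem_LD_iff_Ldesc.1 hi) (mem_LD_iff_Ldesc.1 hi')

/-! ### wavelet lemmas -/

lemma leaves_card_pos : 0 < (T.leaves.card : ℝ) := by
  obtain ⟨x, hx⟩ := Ldesc_nonempty (T := T) T.root
  have : 0 < T.leaves.card := Finset.card_pos.2 ⟨x, (mem_Ldesc.1 hx).1⟩
  exact_mod_cast this

lemma phi_supp (hφ : T.IsHaarLike φ) {v : Fin T.n} (hv : v ∈ T.internal) {i : T.Leaf}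
    (hi : i.1 ∉ T.Ldesc v) : φ v i = 0 := by
  by_cases hvr : v = T.root
  · exact absurd (mem_Ldesc.2 ⟨i.2, hvr ▸ anc_root i.1⟩) hi
  obtain ⟨c₀, c₁, hne, hcc, hval⟩ := hφ.2 v hv hvr
  have hun := Ldesc_eq_union (mem_internal.1 hv) hcc
  rw [hval i, if_neg (fun h => hi (hun ▸ Finset.mem_union_left _ h)),
    if_neg (fun h => hi (hun ▸ Finset.mem_union_right _ h))]

lemma children_mem_pair {v c₀ c₁ : Fin T.n} (hcc : T.children v = {c₀, c₁}) :
    c₀ ∈ T.children v ∧ c₁ ∈ T.children v := by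
  constructor <;> (rw [hcc]; simp)

lemma phi_const (hφ : T.IsHaarLike φ) {v w : Fin T.n} (hv : v ∈ T.internal)
    (hvw : T.Anc v w) (hne : v ≠ w) {i j : T.Leaf}
    (hi : i.1 ∈ T.Ldesc w) (hj : j.1 ∈ T.Ldesc w) : φ v i = φ v j := by
  by_cases hvr : v = T.root
  · subst hvr; rw [hφ.1 i, hφ.1 j]
  obtain ⟨c₀, c₁, hcne, hcc, hval⟩ := hφ.2 v hv hvr
  obtain ⟨hc0, hc1⟩ := children_mem_pair hcc
  obtain ⟨c, hc, hcw⟩ := anc_step hvw hne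
  rw [hcc] at hc
  simp only [Finset.mem_insert, Finset.mem_singleton] at hc
  have hsub := Ldesc_subset (T := T) hcw
  rcases hc with rfl | rfl
  · rw [hval i, hval j, if_pos (hsub hi), if_pos (hsub hj)]
  · rw [hval i, hval j,
      if_neg (Ldesc_children_disjoint hc1 hc0 hcne.symm (hsub hi)),
      if_neg (Ldesc_children_disjoint hc1 hc0 hcne.symm (hsub hj)),
      if_pos (hsub hi), if_pos (hsub hj)]

lemma card_cast_pos (w : Fin T.n) : 0 < ((T.Ldesc w).card : ℝ) := by
  exact_mod_cast Ldesc_card_pos (T := T) w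

lemma Ldesc_card_union {v c₀ c₁ : Fin T.n} (hv : ¬ T.IsLeaf v)
    (hcc : T.children v = {c₀, c₁}) (hcne : c₀ ≠ c₁) :
    ((T.Ldesc v).card : ℝ) = ((T.Ldesc c₀).card : ℝ) + ((T.Ldesc c₁).card : ℝ) := by
  obtain ⟨hc0, hc1⟩ := children_mem_pair hcc
  have hdisj : Disjoint (T.Ldesc c₀) (T.Ldesc c₁) :=
    Finset.disjoint_left.2 fun i hi hi' => Ldesc_children_disjoint hc0 hc1 hcne hi hi'
  rw [Ldesc_eq_union hv hcc, Finset.card_union_of_disjoint hdisj]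
  push_cast; ring

lemma sum_LD_phi (hφ : T.IsHaarLike φ) {v : Fin T.n} (hv : v ∈ T.internal)
    (hvr : v ≠ T.root) : ∑ i ∈ LD T v, φ v i = 0 := by
  obtain ⟨c₀, c₁, hcne, hcc, hval⟩ := hφ.2 v hv hvr
  obtain ⟨hc0, hc1⟩ := children_mem_pair hcc
  rw [LD_union (mem_internal.1 hv) hcc, Finset.sum_union (LD_disjoint hc0 hc1 hcne)]
  set n₀ := ((T.Ldesc c₀).card : ℝ)
  set n₁ := ((T.Ldesc c₁).card : ℝ)
  set nv := ((T.Ldesc v).card : ℝ)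
  have h₀ : 0 < n₀ := card_cast_pos c₀
  have h₁ : 0 < n₁ := card_cast_pos c₁
  have hnv : 0 < nv := card_cast_pos v
  have e0 : ∑ i ∈ LD T c₀, φ v i = n₀ * Real.sqrt (n₁ / (n₀ * nv)) := by
    rw [Finset.sum_congr rfl (fun i hi => by
      rw [hval i, if_pos (mem_LD_iff_Ldesc.1 hi)]), Finset.sum_const, nsmul_eq_mul, LD_card]
  have e1 : ∑ i ∈ LD T c₁, φ v i = n₁ * (- Real.sqrt (n₀ / (n₁ * nv))) := by
    rw [Finset.sum_congr rfl (fun i hi => by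
      rw [hval i, if_neg (Ldesc_children_disjoint hc1 hc0 hcne.symm (mem_LD_iff_Ldesc.1 hi)),
        if_pos (mem_LD_iff_Ldesc.1 hi)]), Finset.sum_const, nsmul_eq_mul, LD_card]
  rw [e0, e1]
  have := sqrt_balance h₀ h₁ hnv
  linarith

lemma sum_univ_phi (hφ : T.IsHaarLike φ) {v : Fin T.n} (hv : v ∈ T.internal)
    (hvr : v ≠ T.root) : ∑ i : T.Leaf, φ v i = 0 := by
  rw [← Finset.sum_subset (Finset.subset_univ (LD T v))
    (fun i _ hi => phi_supp hφ hv (fun h => hi (mem_LD_iff_Ldesc.2 h)))]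
  exact sum_LD_phi hφ hv hvr

lemma phi_norm (hφ : T.IsHaarLike φ) {v : Fin T.n} (hv : v ∈ T.internal) :
    ∑ i : T.Leaf, φ v i * φ v i = 1 := by
  by_cases hvr : v = T.root
  · subst hvr
    have hN := leaves_card_pos (T := T)
    rw [Finset.sum_congr rfl (fun i _ => by rw [hφ.1 i]), Finset.sum_const]
    rw [nsmul_eq_mul]
    have hcard : ((Finset.univ : Finset T.Leaf).card : ℝ) = (T.leaves.card : ℝ) := by
      rw [Finset.card_univ, Fintype.card_coe]
    rw [hcard]
    rw [div_mul_div_comm, one_mul, Real.mul_self_sqrt hN.le]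
    field_simp
  · obtain ⟨c₀, c₁, hcne, hcc, hval⟩ := hφ.2 v hv hvr
    obtain ⟨hc0, hc1⟩ := children_mem_pair hcc
    rw [← Finset.sum_subset (Finset.subset_univ (LD T v))
      (fun i _ hi => by
        rw [phi_supp hφ hv (fun h => hi (mem_LD_iff_Ldesc.2 h)), mul_zero])]
    rw [LD_union (mem_internal.1 hv) hcc, Finset.sum_union (LD_disjoint hc0 hc1 hcne)]
    set n₀ := ((T.Ldesc c₀).card : ℝ)
    set n₁ := ((T.Ldesc c₁).card : ℝ)
    set nv := ((T.Ldesc v).card : ℝ)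
    have h₀ : 0 < n₀ := card_cast_pos c₀
    have h₁ : 0 < n₁ := card_cast_pos c₁
    have hnv : 0 < nv := card_cast_pos v
    have hsum : nv = n₀ + n₁ := Ldesc_card_union (mem_internal.1 hv) hcc hcne
    have e0 : ∑ i ∈ LD T c₀, φ v i * φ v i = n₀ * (n₁ / (n₀ * nv)) := by
      rw [Finset.sum_congr rfl (fun i hi => by
        rw [hval i, if_pos (mem_LD_iff_Ldesc.1 hi),
          Real.mul_self_sqrt (by positivity)]), Finset.sum_const, nsmul_eq_mul, LD_card]
    have e1 : ∑ i ∈ LD T c₁, φ v i * φ v i = n₁ * (n₀ / (n₁ * nv)) := by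
      rw [Finset.sum_congr rfl (fun i hi => by
        rw [hval i, if_neg (Ldesc_children_disjoint hc1 hc0 hcne.symm (mem_LD_iff_Ldesc.1 hi)),
          if_pos (mem_LD_iff_Ldesc.1 hi), neg_mul_neg,
          Real.mul_self_sqrt (by positivity)]), Finset.sum_const, nsmul_eq_mul, LD_card]
    rw [e0, e1, hsum]
    field_simp
    ring

lemma phi_orth (hφ : T.IsHaarLike φ) {u v : Fin T.n} (hu : u ∈ T.internal)
    (hv : v ∈ T.internal) (hne : u ≠ v) : ∑ i : T.Leaf, φ u i * φ v i = 0 := by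
  -- main case : Anc u v (u strict ancestor)
  have main : ∀ u v : Fin T.n, u ∈ T.internal → v ∈ T.internal → u ≠ v → T.Anc u v →
      ∑ i : T.Leaf, φ u i * φ v i = 0 := by
    intro u v hu hv hne hanc
    have hvr : v ≠ T.root := by
      rintro rfl; exact hne (anc_root_eq hanc)
    rw [← Finset.sum_subset (Finset.subset_univ (LD T v))
      (fun i _ hi => by
        rw [phi_supp hφ hv (fun h => hi (mem_LD_iff_Ldesc.2 h)), mul_zero])]
    obtain ⟨i₀, hi₀⟩ := LD_nonempty (T := T) v
    rw [Finset.sum_congr rfl (fun i hi => by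
      rw [phi_const hφ hu hanc hne (mem_LD_iff_Ldesc.1 hi) (mem_LD_iff_Ldesc.1 hi₀)])]
    rw [← Finset.mul_sum, sum_LD_phi hφ hv hvr, mul_zero]
  by_cases h1 : T.Anc u v
  · exact main u v hu hv hne h1
  by_cases h2 : T.Anc v u
  · rw [Finset.sum_congr rfl (fun i _ => mul_comm _ _)]
    exact main v u hv hu hne.symm h2
  · apply Finset.sum_eq_zero
    intro i _
    by_cases hiu : i.1 ∈ T.Ldesc u
    · rw [phi_supp hφ hv (Ldesc_disj h1 h2 hiu), mul_zero]
    · rw [phi_supp hφ hu hiu, zero_mul]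

lemma phi_ne_zero (hφ : T.IsHaarLike φ) {v : Fin T.n} (hv : v ∈ T.internal) {i : T.Leaf}
    (hi : i.1 ∈ T.Ldesc v) : φ v i ≠ 0 := by
  by_cases hvr : v = T.root
  · subst hvr
    rw [hφ.1 i]
    have hN := leaves_card_pos (T := T)
    positivity
  obtain ⟨c₀, c₁, hcne, hcc, hval⟩ := hφ.2 v hv hvr
  obtain ⟨hc0, hc1⟩ := children_mem_pair hcc
  have h₀ := card_cast_pos (T := T) c₀
  have h₁ := card_cast_pos (T := T) c₁
  have hnv := card_cast_pos (T := T) v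
  rw [Ldesc_eq_union (mem_internal.1 hv) hcc, Finset.mem_union] at hi
  rcases hi with h | h
  · rw [hval i, if_pos h]
    positivity
  · rw [hval i, if_neg (Ldesc_children_disjoint hc1 hc0 hcne.symm h), if_pos h]
    simp only [neg_ne_zero]
    positivity

/-! ### the key computation : `S φ_v = ℓ*(·,v) ⊙ φ_v` -/

lemma a_eq_zero (hφ : T.IsHaarLike φ) {v w : Fin T.n} (hv : v ∈ T.internal)
    (hwr : w ≠ T.root) (hnot : ¬ (T.Anc v w ∧ v ≠ w)) :
    ∑ i ∈ LD T w, φ v i = 0 := by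
  by_cases hwv : T.Anc w v
  · have hvr : v ≠ T.root := by rintro rfl; exact hwr (anc_root_eq hwv)
    rw [← Finset.sum_subset
      (show LD T v ⊆ LD T w from fun i hi => mem_LD.2 (anc_trans hwv (mem_LD.1 hi)))
      (fun i _ hi => phi_supp hφ hv (fun h => hi (mem_LD_iff_Ldesc.2 h)))]
    exact sum_LD_phi hφ hv hvr
  · have hvw : ¬ T.Anc v w := by
      intro h
      rcases eq_or_ne v w with rfl | hne
      · exact hwv (anc_refl _)
      · exact hnot ⟨h, hne⟩
    apply Finset.sum_eq_zero
    intro i hi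
    exact phi_supp hφ hv (Ldesc_disj hwv hvw (mem_LD_iff_Ldesc.1 hi))

lemma a_strict (hφ : T.IsHaarLike φ) {v w : Fin T.n} (hv : v ∈ T.internal)
    (hanc : T.Anc v w) (hne : v ≠ w) {j : T.Leaf} (hj : j ∈ LD T w) :
    ∑ i ∈ LD T w, φ v i = ((T.Ldesc w).card : ℝ) * φ v j := by
  rw [Finset.sum_congr rfl (fun i hi =>
    phi_const hφ hv hanc hne (mem_LD_iff_Ldesc.1 hi) (mem_LD_iff_Ldesc.1 hj)),
    Finset.sum_const, nsmul_eq_mul, LD_card]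

lemma cov_apply (ℓ : Fin T.n → ℝ) (j i : T.Leaf) :
    T.cov ℓ j i = ∑ w ∈ Finset.univ.filter (fun w => w ≠ T.root),
      ℓ w * (T.delta w j * T.delta w i) := by
  rw [cov]
  simp [Matrix.sum_apply, Matrix.vecMulVec_apply]

lemma path_iff {v w j : Fin T.n} (hj : T.Anc v j) :
    (T.Anc w j ∧ T.Anc v w ∧ w ≠ v) ↔
      ((T.Anc w j ∧ ¬ T.Anc w v) ∨ (T.Anc w v ∧ ¬ T.Anc w j)) := by
  constructor
  · rintro ⟨h1, h2, h3⟩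
    exact Or.inl ⟨h1, fun h => h3 (anc_antisymm h h2)⟩
  · rintro (⟨h1, h2⟩ | ⟨h1, h2⟩)
    · rcases anc_total h1 hj with h | h
      · exact absurd h h2
      · exact ⟨h1, h, fun e => h2 (e ▸ anc_refl w)⟩
    · exact absurd (anc_trans h1 hj) h2

lemma cov_mulvec (hφ : T.IsHaarLike φ) {v : Fin T.n} (hv : v ∈ T.internal)
    (ℓ : Fin T.n → ℝ) (j : T.Leaf) :
    ∑ i : T.Leaf, T.cov ℓ j i * φ v i = T.lstar ℓ j.1 v * φ v j := by
  classical
  set F := Finset.univ.filter (fun w : Fin T.n => w ≠ T.root) with hF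
  have step1 : ∑ i : T.Leaf, T.cov ℓ j i * φ v i
      = ∑ w ∈ F, ℓ w * T.delta w j * ∑ i ∈ LD T w, φ v i := by
    rw [Finset.sum_congr rfl (fun i _ => by rw [cov_apply, Finset.sum_mul])]
    rw [Finset.sum_comm]
    apply Finset.sum_congr rfl
    intro w _
    have hLD : ∑ i ∈ LD T w, φ v i = ∑ i : T.Leaf, T.delta w i * φ v i := by
      rw [LD, Finset.sum_filter]
      exact Finset.sum_congr rfl (fun i _ => by by_cases h : T.Anc w i.1 <;> simp [delta, h])
    rw [hLD, Finset.mul_sum]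
    exact Finset.sum_congr rfl (fun i _ => by ring)
  have step2 : ∑ w ∈ F, ℓ w * T.delta w j * ∑ i ∈ LD T w, φ v i
      = ∑ w ∈ F.filter (fun w => T.Anc w j.1 ∧ T.Anc v w ∧ w ≠ v),
          ℓ w * T.delta w j * ∑ i ∈ LD T w, φ v i := by
    rw [← Finset.sum_filter_add_sum_filter_not F
      (fun w => T.Anc w j.1 ∧ T.Anc v w ∧ w ≠ v)]
    have hzero : ∑ w ∈ F.filter (fun w => ¬ (T.Anc w j.1 ∧ T.Anc v w ∧ w ≠ v)),
        ℓ w * T.delta w j * ∑ i ∈ LD T w, φ v i = 0 := by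
      apply Finset.sum_eq_zero
      intro w hw
      rw [Finset.mem_filter] at hw
      have hwr : w ≠ T.root := (Finset.mem_filter.1 hw.1).2
      by_cases hwj : T.Anc w j.1
      · have hnot : ¬ (T.Anc v w ∧ v ≠ w) := by
          rintro ⟨h1, h2⟩
          exact hw.2 ⟨hwj, h1, fun e => h2 e.symm⟩
        rw [a_eq_zero hφ hv hwr hnot, mul_zero]
      · have hd : T.delta w j = 0 := by simp [delta, hwj]
        rw [hd, mul_zero, zero_mul]
    rw [hzero, add_zero]
  have step3 : ∑ w ∈ F.filter (fun w => T.Anc w j.1 ∧ T.Anc v w ∧ w ≠ v),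
        ℓ w * T.delta w j * ∑ i ∈ LD T w, φ v i
      = (∑ w ∈ F.filter (fun w => T.Anc w j.1 ∧ T.Anc v w ∧ w ≠ v),
          ((T.Ldesc w).card : ℝ) * ℓ w) * φ v j := by
    rw [Finset.sum_mul]
    apply Finset.sum_congr rfl
    intro w hw
    rw [Finset.mem_filter] at hw
    obtain ⟨hwj, hvw, hwv⟩ := hw.2
    have hd : T.delta w j = 1 := by simp [delta, hwj]
    rw [hd, a_strict hφ hv hvw (fun e => hwv (e ▸ rfl)) (mem_LD.2 hwj)]
    ring
  rw [step1, step2, step3]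
  by_cases hj : j.1 ∈ T.Ldesc v
  · have hanc : T.Anc v j.1 := (mem_Ldesc.1 hj).2
    have hset : F.filter (fun w => T.Anc w j.1 ∧ T.Anc v w ∧ w ≠ v)
        = Finset.univ.filter (fun w => w ≠ T.root ∧
            ((T.Anc w j.1 ∧ ¬ T.Anc w v) ∨ (T.Anc w v ∧ ¬ T.Anc w j.1))) := by
      rw [hF, Finset.filter_filter]
      apply Finset.filter_congr
      intro w _
      constructor
      · rintro ⟨h1, h2⟩; exact ⟨h1, (path_iff hanc).1 h2⟩
      · rintro ⟨h1, h2⟩; exact ⟨h1, (path_iff hanc).2 h2⟩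
    rw [hset, lstar]
  · rw [phi_supp hφ hv hj, mul_zero, mul_zero]

/-! ### orthogonal matrix of wavelets -/

open Matrix in
lemma _dummy : True := trivial

open Matrix

lemma card_leaf_eq_internal (hT : T.IsORB) :
    Fintype.card T.Leaf = Fintype.card {v // v ∈ T.internal} := by
  rw [Fintype.card_coe, Fintype.card_coe]
  exact (card_internal_eq_card_leaves hT).symm

def leafEquiv (T : RTree) (hT : T.IsORB) : T.Leaf ≃ {v // v ∈ T.internal} :=
  Fintype.equivOfCardEq (card_leaf_eq_internal hT)

def Pmat (T : RTree) (hT : T.IsORB) (φ : Fin T.n → T.Leaf → ℝ) : Matrix T.Leaf T.Leaf ℝ :=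
  Matrix.of fun i u => φ (leafEquiv T hT u).1 i

lemma Pmat_left (hT : T.IsORB) (hφ : T.IsHaarLike φ) :
    (Pmat T hT φ)ᵀ * Pmat T hT φ = 1 := by
  ext u u'
  rw [Matrix.mul_apply]
  simp only [Matrix.transpose_apply, Pmat, Matrix.of_apply]
  by_cases h : u = u'
  · subst h
    rw [Matrix.one_apply_eq]
    exact phi_norm hφ (leafEquiv T hT u).2
  · rw [Matrix.one_apply_ne h]
    exact phi_orth hφ (leafEquiv T hT u).2 (leafEquiv T hT u').2
      (fun hh => h ((leafEquiv T hT).injective (Subtype.ext hh)))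

lemma Pmat_right (hT : T.IsORB) (hφ : T.IsHaarLike φ) :
    Pmat T hT φ * (Pmat T hT φ)ᵀ = 1 :=
  mul_eq_one_comm.1 (Pmat_left hT hφ)

lemma phi_complete (hT : T.IsORB) (hφ : T.IsHaarLike φ) (i j : T.Leaf) :
    ∑ v ∈ T.internal, φ v i * φ v j = if i = j then (1:ℝ) else 0 := by
  have h := congrFun (congrFun (Pmat_right hT hφ) i) j
  rw [Matrix.mul_apply] at h
  simp only [Matrix.transpose_apply, Pmat, Matrix.of_apply] at h
  calc ∑ v ∈ T.internal, φ v i * φ v j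
      = ∑ w : {v // v ∈ T.internal}, φ w.1 i * φ w.1 j := (Finset.sum_coe_sort _ _).symm
    _ = ∑ u : T.Leaf, φ (leafEquiv T hT u).1 i * φ (leafEquiv T hT u).1 j :=
        (Equiv.sum_comp (leafEquiv T hT) _).symm
    _ = _ := by rw [h, Matrix.one_apply]

lemma cov_symm (ℓ : Fin T.n → ℝ) (i j : T.Leaf) : T.cov ℓ i j = T.cov ℓ j i := by
  rw [cov_apply, cov_apply]
  exact Finset.sum_congr rfl (fun w _ => by ring)

lemma B_eq (hφ : T.IsHaarLike φ) {v : Fin T.n} (hv : v ∈ T.internal)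
    (ℓ : Fin T.n → ℝ) (u : Fin T.n) :
    (∑ j : T.Leaf, ∑ i : T.Leaf, φ u j * T.cov ℓ j i * φ v i)
      = ∑ j : T.Leaf, φ u j * (T.lstar ℓ j.1 v * φ v j) := by
  apply Finset.sum_congr rfl
  intro j _
  rw [← cov_mulvec hφ hv ℓ j, Finset.mul_sum]
  exact Finset.sum_congr rfl (fun i _ => by ring)

lemma B_symm (ℓ : Fin T.n → ℝ) (u v : Fin T.n) :
    (∑ j : T.Leaf, ∑ i : T.Leaf, φ u j * T.cov ℓ j i * φ v i)
      = ∑ j : T.Leaf, ∑ i : T.Leaf, φ v j * T.cov ℓ j i * φ u i := by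
  rw [Finset.sum_comm]
  apply Finset.sum_congr rfl
  intro j _
  apply Finset.sum_congr rfl
  intro i _
  rw [cov_symm (T := T) ℓ i j]
  ring

end RTree

open RTree Matrix Polynomial

/-- `T` is trace-balanced iff the Haar-like basis diagonalizes its covariance matrix
`S`; in this case `σ(S) = {ℓ*(v,i) : v ∈ I}` and the multiplicity of each eigenvalue
`λ` is the number of internal nodes `v` with `ℓ*(v,i) = λ` (captured by the
characteristic polynomial factoring as `∏_{v ∈ I} (X - ℓ*(v,·))`). -/
theorem traceBalanced_iff_diagonalized (T : RTree) (hT : T.IsORB) (ℓ : Fin T.n → ℝ)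
    (hℓ : ∀ v, 0 ≤ ℓ v) (hℓpos : ∀ v, T.IsLeaf v → 0 < ℓ v)
    (φ : Fin T.n → T.Leaf → ℝ) (hφ : T.IsHaarLike φ) :
    (T.TraceBalanced ℓ ↔
      ∀ u ∈ T.internal, ∀ v ∈ T.internal, u ≠ v →
        (∑ j : T.Leaf, ∑ i : T.Leaf, φ u j * T.cov ℓ j i * φ v i) = 0) ∧
    (T.TraceBalanced ℓ → ∀ g : Fin T.n → ℝ,
      (∀ v ∈ T.internal, ∀ i ∈ T.Ldesc v, T.lstar ℓ i v = g v) →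
      spectrum ℝ (T.cov ℓ) = g '' {v | v ∈ T.internal} ∧
      (T.cov ℓ).charpoly
        = ∏ v ∈ T.internal, (Polynomial.X - Polynomial.C (g v))) := by
  classical
  have hroot_int : T.root ∈ T.internal := root_mem_internal hT
  constructor
  · constructor
    · -- trace-balanced implies off-diagonal entries vanish
      intro hTB u hu v hv huv
      have main : ∀ u v : Fin T.n, u ∈ T.internal → v ∈ T.internal → u ≠ v → v ≠ T.root →
          (∑ j : T.Leaf, ∑ i : T.Leaf, φ u j * T.cov ℓ j i * φ v i) = 0 := by
        intro u v hu hv huv hvr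
        rw [B_eq hφ hv ℓ u]
        obtain ⟨x, hx⟩ := Ldesc_nonempty (T := T) v
        have hstep : ∀ j : T.Leaf, φ u j * (T.lstar ℓ j.1 v * φ v j)
            = T.lstar ℓ x v * (φ u j * φ v j) := by
          intro j
          by_cases hj : j.1 ∈ T.Ldesc v
          · rw [hTB v hv hvr j.1 hj x hx]; ring
          · rw [phi_supp hφ hv hj]; ring
        rw [Finset.sum_congr rfl (fun j _ => hstep j), ← Finset.mul_sum,
          phi_orth hφ hu hv huv, mul_zero]
      by_cases hvr : v = T.root
      · subst hvr
        rw [B_symm]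
        exact main T.root u hroot_int hu (Ne.symm huv) huv
      · exact main u v hu hv huv hvr
    · -- diagonalization implies trace-balanced
      intro hOD v hv hvr i hi j hj
      have key : ∀ k : T.Leaf, k.1 ∈ T.Ldesc v →
          T.lstar ℓ k.1 v = ∑ m : T.Leaf, φ v m * (T.lstar ℓ m.1 v * φ v m) := by
        intro k hk
        have hc : T.lstar ℓ k.1 v * φ v k
            = ∑ w ∈ T.internal, φ w k * ∑ m : T.Leaf, φ w m * (T.lstar ℓ m.1 v * φ v m) := by
          calc T.lstar ℓ k.1 v * φ v k
              = ∑ m : T.Leaf, (if k = m then (1:ℝ) else 0) * (T.lstar ℓ m.1 v * φ v m) := by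
                rw [Finset.sum_congr rfl
                  (fun m _ => by rw [ite_mul, one_mul, zero_mul]), Finset.sum_ite_eq]
                simp
            _ = ∑ m : T.Leaf, (∑ w ∈ T.internal, φ w k * φ w m)
                  * (T.lstar ℓ m.1 v * φ v m) :=
                Finset.sum_congr rfl (fun m _ => by rw [phi_complete hT hφ k m])
            _ = ∑ m : T.Leaf, ∑ w ∈ T.internal,
                  φ w k * φ w m * (T.lstar ℓ m.1 v * φ v m) :=
                Finset.sum_congr rfl (fun m _ => by rw [Finset.sum_mul])
            _ = ∑ w ∈ T.internal, ∑ m : T.Leaf,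
                  φ w k * φ w m * (T.lstar ℓ m.1 v * φ v m) := Finset.sum_comm
            _ = ∑ w ∈ T.internal, φ w k * ∑ m : T.Leaf,
                  φ w m * (T.lstar ℓ m.1 v * φ v m) := by
                refine Finset.sum_congr rfl (fun w _ => ?_)
                rw [Finset.mul_sum]
                exact Finset.sum_congr rfl (fun m _ => by ring)
        have hz : ∀ w ∈ T.internal, w ≠ v →
            φ w k * ∑ m : T.Leaf, φ w m * (T.lstar ℓ m.1 v * φ v m) = 0 := by
          intro w hw hwv
          rw [← B_eq hφ hv ℓ w, hOD w hw v hv hwv, mul_zero]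
        rw [Finset.sum_eq_single_of_mem v hv (fun w hw hwv => hz w hw hwv)] at hc
        exact mul_right_cancel₀ (phi_ne_zero hφ hv hk) (hc.trans (mul_comm _ _))
      exact (key ⟨i, (mem_Ldesc.1 hi).1⟩ hi).trans (key ⟨j, (mem_Ldesc.1 hj).1⟩ hj).symm
  · -- spectrum and characteristic polynomial
    intro _hTB g hg
    have hPtP := Pmat_left hT hφ
    have hPPt := Pmat_right hT hφ
    set e := leafEquiv T hT with he
    set P := Pmat T hT φ with hP
    set dfun : T.Leaf → ℝ := fun u => g (e u).1 with hdfun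
    have hSP : T.cov ℓ * P = P * Matrix.diagonal dfun := by
      ext i u
      rw [Matrix.mul_apply, Matrix.mul_diagonal]
      have h1 : ∑ k, T.cov ℓ i k * P k u = T.lstar ℓ i.1 (e u).1 * φ (e u).1 i := by
        simp only [hP, Pmat, Matrix.of_apply, he]
        exact cov_mulvec hφ (e u).2 ℓ i
      rw [h1]
      simp only [hP, Pmat, Matrix.of_apply, hdfun, he]
      by_cases hiu : i.1 ∈ T.Ldesc (leafEquiv T hT u).1
      · rw [hg (leafEquiv T hT u).1 (leafEquiv T hT u).2 i.1 hiu, mul_comm]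
      · rw [phi_supp hφ (leafEquiv T hT u).2 hiu, mul_zero, zero_mul]
    have hS : T.cov ℓ = P * Matrix.diagonal dfun * Pᵀ := by
      calc T.cov ℓ = T.cov ℓ * (P * Pᵀ) := by rw [hPPt, mul_one]
        _ = T.cov ℓ * P * Pᵀ := by rw [Matrix.mul_assoc]
        _ = P * Matrix.diagonal dfun * Pᵀ := by rw [hSP]
    constructor
    · -- spectrum
      have hU : T.cov ℓ
          = ((⟨P, Pᵀ, hPPt, hPtP⟩ : (Matrix T.Leaf T.Leaf ℝ)ˣ) : Matrix T.Leaf T.Leaf ℝ)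
            * Matrix.diagonal dfun
            * (((⟨P, Pᵀ, hPPt, hPtP⟩ : (Matrix T.Leaf T.Leaf ℝ)ˣ))⁻¹ :
                (Matrix T.Leaf T.Leaf ℝ)ˣ) := hS
      rw [hU, spectrum.units_conjugate, spectrum_diagonal]
      ext lam
      simp only [Set.mem_range, Set.mem_image, Set.mem_setOf_eq, hdfun]
      constructor
      · rintro ⟨u, hu⟩; exact ⟨(e u).1, (e u).2, hu⟩
      · rintro ⟨w, hw, hww⟩
        refine ⟨e.symm ⟨w, hw⟩, ?_⟩
        rw [Equiv.apply_symm_apply]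
        exact hww
    · -- charpoly
      have hone : P.map ⇑(Polynomial.C : ℝ →+* ℝ[X]) * Pᵀ.map ⇑(Polynomial.C : ℝ →+* ℝ[X])
          = 1 := by
        rw [← Matrix.map_mul, hPPt, Matrix.map_one _ (map_zero _) (map_one _)]
      have hscal : P.map ⇑(Polynomial.C : ℝ →+* ℝ[X]) * Matrix.scalar T.Leaf (X : ℝ[X])
          = Matrix.scalar T.Leaf (X : ℝ[X]) * P.map ⇑(Polynomial.C : ℝ →+* ℝ[X]) := by
        ext a b
        rw [Matrix.scalar_apply, Matrix.mul_diagonal, Matrix.diagonal_mul, mul_comm]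
      have hcm : P.map ⇑(Polynomial.C : ℝ →+* ℝ[X]) * Matrix.charmatrix (Matrix.diagonal dfun)
            * Pᵀ.map ⇑(Polynomial.C : ℝ →+* ℝ[X])
          = Matrix.charmatrix (P * Matrix.diagonal dfun * Pᵀ) := by
        simp only [Matrix.charmatrix, RingHom.mapMatrix_apply]
        rw [Matrix.mul_sub, Matrix.sub_mul]
        refine congrArg₂ (fun a b => a - b) ?_ ?_
        · rw [hscal, Matrix.mul_assoc, hone, mul_one]
        · rw [Matrix.map_mul, Matrix.map_mul]
      have hchar : (T.cov ℓ).charpoly = (Matrix.diagonal dfun).charpoly := by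
        rw [hS, Matrix.charpoly, Matrix.charpoly, ← hcm, Matrix.det_mul, Matrix.det_mul]
        have hdet : (P.map ⇑(Polynomial.C : ℝ →+* ℝ[X])).det
            * (Pᵀ.map ⇑(Polynomial.C : ℝ →+* ℝ[X])).det = 1 := by
          rw [← Matrix.det_mul, hone, Matrix.det_one]
        rw [mul_right_comm, hdet, one_mul]
      rw [hchar]
      have hcd : Matrix.charmatrix (Matrix.diagonal dfun)
          = Matrix.diagonal (fun u : T.Leaf => (X : ℝ[X]) - Polynomial.C (dfun u)) := by
        ext a b
        by_cases hab : a = b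
        · subst hab
          rw [Matrix.charmatrix_apply_eq, Matrix.diagonal_apply_eq, Matrix.diagonal_apply_eq]
        · rw [Matrix.charmatrix_apply_ne _ _ _ hab, Matrix.diagonal_apply_ne _ hab,
            Matrix.diagonal_apply_ne _ hab]
          simp
      rw [Matrix.charpoly, hcd, Matrix.det_diagonal]
      calc ∏ u : T.Leaf, ((X : ℝ[X]) - Polynomial.C (dfun u))
          = ∏ w : {v // v ∈ T.internal}, ((X : ℝ[X]) - Polynomial.C (g w.1)) :=
            Equiv.prod_comp e (fun w : {v // v ∈ T.internal} => (X : ℝ[X]) - Polynomial.C (g w.1))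
        _ = ∏ v ∈ T.internal, ((X : ℝ[X]) - Polynomial.C (g v)) :=
            Finset.prod_coe_sort T.internal (fun v => (X : ℝ[X]) - Polynomial.C (g v))
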